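/- Assume strict feasibility, i.e., Pmax·∑_k b_k > η. Then for every global minimizer (x*, α*) of (P2) there exists λ* ≥ 0 such that: (i) for every k, x*_k = h_k²/(h_k² − λ*·b_k)² if λ* < ι_k(α*) and x*_k = α*·Pmax if λ* ≥ ι_k(α*); (ii) complementary slackness holds: λ*·(η·α* − ∑_k b_k·x*_k) = 0; and (iii) (σ² + λ*·η)/Pmax = ∑_k max(0, h_k/√(Pmax·α*) − (h_k² − λ*·b_k)). -/

import Mathlib

open Finset

/-- Objective of problem (P2). -/
noncomputable def objP2 (K : ℕ) (h : Fin K → ℝ) (σ2 : ℝ)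
    (x : Fin K → ℝ) (α : ℝ) : ℝ :=
  ∑ k, (h k) ^ 2 * x k - 2 * ∑ k, h k * Real.sqrt (x k) + α * σ2

/-- Feasibility for problem (P2). -/
def FeasP2 (K : ℕ) (b : Fin K → ℝ) (η Pmax : ℝ)
    (x : Fin K → ℝ) (α : ℝ) : Prop :=
  (∑ k, b k * x k) ≥ η * α ∧ (∀ k, 0 ≤ x k ∧ x k ≤ Pmax * α) ∧ 0 < α

/-- The threshold function `ι_k(α)`. -/
noncomputable def iota (K : ℕ) (h b : Fin K → ℝ) (Pmax : ℝ)
    (k : Fin K) (α : ℝ) : ℝ :=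
  (h k) ^ 2 / b k * (1 - 1 / (h k * Real.sqrt (α * Pmax)))

/-- per-coordinate objective term -/
noncomputable def phiP2 (h t : ℝ) : ℝ := h ^ 2 * t - 2 * (h * Real.sqrt t)

lemma hasDerivAt_phiP2 (h : ℝ) {c : ℝ} (hc : 0 < c) :
    HasDerivAt (phiP2 h) (h ^ 2 - h / Real.sqrt c) c := by
  have hs := (Real.hasDerivAt_sqrt hc.ne').const_mul h
  have hd := ((hasDerivAt_id c).const_mul (h ^ 2)).sub (hs.const_mul 2)
  have hsc : Real.sqrt c ≠ 0 := by positivity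
  convert hd using 1
  · rfl
  · rfl
  · rfl
  field_simp

lemma hasDerivAt_phiP2_affine (h : ℝ) {u m t0 : ℝ} (hpos : 0 < u + m * t0) :
    HasDerivAt (fun t => phiP2 h (u + m * t)) ((h ^ 2 - h / Real.sqrt (u + m * t0)) * m) t0 := by
  have ha : HasDerivAt (fun t : ℝ => u + m * t) m t0 := by
    simpa using ((hasDerivAt_id' t0).const_mul m).const_add u
  exact (hasDerivAt_phiP2 h hpos).comp t0 ha

lemma sum_comp_update {K : ℕ} (f : Fin K → ℝ → ℝ) (x : Fin K → ℝ) (j : Fin K) (v : ℝ) :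
    ∑ k, f k (Function.update x j v k) = (∑ k, f k (x k)) + (f j v - f j (x j)) := by
  classical
  rw [← Finset.sum_erase_add univ _ (mem_univ j),
    ← Finset.sum_erase_add univ (fun k => f k (x k)) (mem_univ j)]
  have : ∑ k ∈ univ.erase j, f k (Function.update x j v k) = ∑ k ∈ univ.erase j, f k (x k) :=
    Finset.sum_congr rfl fun i hi => by rw [Function.update_of_ne (Finset.ne_of_mem_erase hi)]
  rw [this, Function.update_self]
  ring

/-- right one-sided Fermat -/
lemma deriv_nonneg_of_min_right {f : ℝ → ℝ} {f' a c : ℝ} (hd : HasDerivAt f f' a) (hc : a < c)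
    (hm : ∀ t ∈ Set.Ico a c, f a ≤ f t) : 0 ≤ f' := by
  have h1 : IsLocalMinOn f (Set.Ici a) a := by
    have hmem : Set.Ico a c ∈ nhdsWithin a (Set.Ici a) := Ico_mem_nhdsGE hc
    exact Filter.eventually_iff_exists_mem.2 ⟨_, hmem, hm⟩
  have h2 : (1 : ℝ) ∈ posTangentConeAt (Set.Ici a) a := by
    apply mem_posTangentConeAt_of_segment_subset
    intro y hy
    rw [segment_eq_Icc (by linarith : a ≤ a + 1)] at hy
    exact hy.1
  have := h1.hasFDerivWithinAt_nonneg (hd.hasFDerivAt.hasFDerivWithinAt) h2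
  simpa using this

/-- left one-sided Fermat -/
lemma deriv_nonpos_of_min_left {f : ℝ → ℝ} {f' a c : ℝ} (hd : HasDerivAt f f' a) (hc : c < a)
    (hm : ∀ t ∈ Set.Ioc c a, f a ≤ f t) : f' ≤ 0 := by
  have hg : HasDerivAt (fun t => f (2 * a - t)) (f' * (-1)) a := by
    have ha : HasDerivAt (fun t : ℝ => 2 * a - t) (-1) a := by
      simpa using (hasDerivAt_id' a).const_sub (2 * a)
    have hd' : HasDerivAt f f' (2 * a - a) := by
      rw [show (2 : ℝ) * a - a = a by ring]; exact hd
    exact HasDerivAt.comp a hd' ha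
  have h0 : (0 : ℝ) ≤ f' * (-1) := by
    refine deriv_nonneg_of_min_right hg (by linarith : a < a + (a - c)) ?_
    intro t ht
    have h1 : (2 : ℝ) * a - a = a := by ring
    rw [h1]
    exact hm _ ⟨by cases ht with | intro l r => linarith, by cases ht with | intro l r => linarith⟩
  linarith

lemma deriv_eq_zero_of_min_Ioo {f : ℝ → ℝ} {f' a c e : ℝ} (hd : HasDerivAt f f' a)
    (h1 : c < a) (h2 : a < e) (hm : ∀ t ∈ Set.Ioo c e, f a ≤ f t) : f' = 0 := by
  have : IsLocalMin f a := by
    have hmem : Set.Ioo c e ∈ nhds a := Ioo_mem_nhds h1 h2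
    exact Filter.eventually_iff_exists_mem.2 ⟨_, hmem, hm⟩
  exact this.hasDerivAt_eq_zero hd

lemma objP2_eq_sum (K : ℕ) (h : Fin K → ℝ) (σ2 : ℝ) (x : Fin K → ℝ) (α : ℝ) :
    objP2 K h σ2 x α = (∑ k, phiP2 (h k) (x k)) + α * σ2 := by
  unfold objP2 phiP2
  rw [Finset.sum_sub_distrib, ← Finset.mul_sum]

lemma objP2_update (K : ℕ) (h : Fin K → ℝ) (σ2 : ℝ) (x : Fin K → ℝ) (α : ℝ)
    (j : Fin K) (v : ℝ) :
    objP2 K h σ2 (Function.update x j v) α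
      = objP2 K h σ2 x α + (phiP2 (h j) v - phiP2 (h j) (x j)) := by
  rw [objP2_eq_sum, objP2_eq_sum, sum_comp_update (fun k t => phiP2 (h k) t)]
  ring

lemma budget_update {K : ℕ} (b x : Fin K → ℝ) (j : Fin K) (v : ℝ) :
    ∑ k, b k * Function.update x j v k = (∑ k, b k * x k) + (b j * v - b j * x j) :=
  sum_comp_update (fun k t => b k * t) x j v

set_option maxHeartbeats 1000000 in
theorem stmt_10 (K : ℕ) (hK : 1 ≤ K) (h b : Fin K → ℝ)
    (hh : ∀ k, 0 < h k) (hb : ∀ k, 0 < b k)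
    (σ2 η Pmax : ℝ) (hσ : 0 < σ2) (hη : 0 < η) (hP : 0 < Pmax)
    (hstrict : Pmax * ∑ k, b k > η)
    (x : Fin K → ℝ) (α : ℝ)
    (hfeas : FeasP2 K b η Pmax x α)
    (hmin : ∀ (y : Fin K → ℝ) (β : ℝ), FeasP2 K b η Pmax y β →
      objP2 K h σ2 x α ≤ objP2 K h σ2 y β) :
    ∃ lam : ℝ, 0 ≤ lam ∧
      -- (i) closed form of the optimal powers
      (∀ k,
        (lam < iota K h b Pmax k α →
          x k = (h k) ^ 2 / ((h k) ^ 2 - lam * b k) ^ 2) ∧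
        (iota K h b Pmax k α ≤ lam → x k = α * Pmax)) ∧
      -- (ii) complementary slackness
      lam * (η * α - ∑ k, b k * x k) = 0 ∧
      -- (iii) stationarity in α
      (σ2 + lam * η) / Pmax =
        ∑ k, max 0 (h k / Real.sqrt (Pmax * α) - ((h k) ^ 2 - lam * b k)) := by
  obtain ⟨hbud, hbox, hα⟩ := hfeas
  have hU : 0 < Pmax * α := mul_pos hP hα
  -- Step 1: all coordinates are strictly positive
  have hxpos : ∀ k, 0 < x k := by
    intro k
    rcases ((hbox k).1).lt_or_eq with hlt | heq
    · exact hlt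
    exfalso
    set t : ℝ := min (Pmax * α) (1 / (h k) ^ 2) with ht
    have htpos : 0 < t := lt_min hU (by have := hh k; positivity)
    have hfe : FeasP2 K b η Pmax (Function.update x k t) α := by
      refine ⟨?_, ?_, hα⟩
      · rw [budget_update]
        have : 0 ≤ b k * t - b k * x k := by
          rw [← heq]; have := mul_pos (hb k) htpos; linarith
        linarith [hbud]
      · intro i
        rcases eq_or_ne i k with rfl | hne
        · rw [Function.update_self]
          exact ⟨htpos.le, min_le_left _ _⟩
        · rw [Function.update_of_ne hne]; exact hbox i
    have hle := hmin _ _ hfe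
    rw [objP2_update] at hle
    have h0 : phiP2 (h k) (x k) = 0 := by rw [← heq]; simp [phiP2]
    have hneg : phiP2 (h k) t < 0 := by
      have hs : 0 < Real.sqrt t := Real.sqrt_pos.2 htpos
      have h1 : h k * Real.sqrt t ≤ 1 := by
        have h2 : Real.sqrt t ≤ Real.sqrt (1 / (h k) ^ 2) :=
          Real.sqrt_le_sqrt (min_le_right _ _)
        have h3 : Real.sqrt (1 / (h k) ^ 2) = 1 / h k := by
          rw [show 1 / (h k) ^ 2 = (1 / h k) ^ 2 by ring, Real.sqrt_sq (by have := hh k; positivity)]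
        rw [h3] at h2
        have := mul_le_mul_of_nonneg_left h2 (hh k).le
        rwa [mul_one_div, div_self (hh k).ne'] at this
      have ht2 : (h k) ^ 2 * t = (h k * Real.sqrt t) ^ 2 := by
        rw [mul_pow, Real.sq_sqrt htpos.le]
      unfold phiP2
      nlinarith [mul_pos (hh k) hs]
    rw [h0] at hle
    linarith
  -- Step 2: stationarity along the scaling direction
  have hE1 : (∑ k, (h k) ^ 2 * x k) - (∑ k, h k * Real.sqrt (x k)) + α * σ2 = 0 := by
    have hαne : α ≠ 0 := hα.ne'
    set A := ∑ k, (h k) ^ 2 * x k with hA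
    set B := ∑ k, h k * Real.sqrt (x k) with hB
    have h11 : HasDerivAt (fun β : ℝ => β / α) (1 / α) α := by
      simpa using (hasDerivAt_id α).div_const α
    have hne1 : α / α ≠ 0 := by rw [div_self hαne]; norm_num
    have h12 : HasDerivAt (fun β : ℝ => Real.sqrt (β / α)) (1 / (2 * α)) α := by
      have hcomp := HasDerivAt.comp (h := fun β : ℝ => β / α) α (Real.hasDerivAt_sqrt hne1) h11
      convert hcomp using 1
      · rfl
      · rfl
      · rfl
      rw [div_self hαne, Real.sqrt_one]
      field_simp
    have hG : HasDerivAt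
        (fun β : ℝ => (β / α) * A - 2 * (Real.sqrt (β / α) * B) + β * σ2)
        ((1 / α) * A - (1 / α) * B + σ2) α := by
      have hder := ((h11.mul_const A).sub (h12.const_mul (2 * B))).add
        ((hasDerivAt_id α).mul_const σ2)
      convert hder using 1
      · rfl
      · rfl
      · funext β; simp only [id_eq, Pi.add_apply, Pi.sub_apply]; ring
      · field_simp
    have hm : ∀ β ∈ Set.Ioo (α / 2) (2 * α),
        (α / α) * A - 2 * (Real.sqrt (α / α) * B) + α * σ2 ≤
        (β / α) * A - 2 * (Real.sqrt (β / α) * B) + β * σ2 := by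
      intro β hβ
      obtain ⟨hβ1, hβ2⟩ := hβ
      have hβpos : 0 < β := by linarith
      have hrpos : 0 < β / α := div_pos hβpos hα
      have hfe : FeasP2 K b η Pmax (fun k => (β / α) * x k) β := by
        refine ⟨?_, ?_, hβpos⟩
        · have hs : ∑ k, b k * ((β / α) * x k) = (β / α) * ∑ k, b k * x k := by
            rw [Finset.mul_sum]; exact Finset.sum_congr rfl fun k _ => by ring
          rw [ge_iff_le, hs]
          have h2 := mul_le_mul_of_nonneg_left hbud hrpos.le
          calc η * β = (β / α) * (η * α) := by field_simp
          _ ≤ (β / α) * ∑ k, b k * x k := h2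
        · intro k
          refine ⟨mul_nonneg hrpos.le (hbox k).1, ?_⟩
          calc (β / α) * x k ≤ (β / α) * (Pmax * α) :=
              mul_le_mul_of_nonneg_left (hbox k).2 hrpos.le
          _ = Pmax * β := by field_simp
      have hobj := hmin _ _ hfe
      have ho1 : objP2 K h σ2 (fun k => (β / α) * x k) β
          = (β / α) * A - 2 * (Real.sqrt (β / α) * B) + β * σ2 := by
        unfold objP2
        have e1 : ∑ k, (h k) ^ 2 * ((β / α) * x k) = (β / α) * A := by
          rw [hA, Finset.mul_sum]; exact Finset.sum_congr rfl fun k _ => by ring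
        have e2 : ∑ k, h k * Real.sqrt ((β / α) * x k) = Real.sqrt (β / α) * B := by
          rw [hB, Finset.mul_sum]
          refine Finset.sum_congr rfl fun k _ => ?_
          rw [Real.sqrt_mul hrpos.le]
          ring
        rw [e1, e2]
      have ho2 : objP2 K h σ2 x α = (α / α) * A - 2 * (Real.sqrt (α / α) * B) + α * σ2 := by
        unfold objP2
        rw [div_self hαne, Real.sqrt_one, ← hA, ← hB]
        ring
      rw [← ho1, ← ho2]
      exact hobj
    have h0 := deriv_eq_zero_of_min_Ioo hG (by linarith) (by linarith) hm
    field_simp at h0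
    linarith
  -- the marginal cost of coordinate k
  set d : Fin K → ℝ := fun k => (h k) ^ 2 - h k / Real.sqrt (x k) with hd
  have hdspec : ∀ k, d k = (h k) ^ 2 - h k / Real.sqrt (x k) := fun k => rfl
  have hderF : ∀ j : Fin K, HasDerivAt
      (fun t => objP2 K h σ2 (Function.update x j t) α) (d j) (x j) := by
    intro j
    have heq : (fun t => objP2 K h σ2 (Function.update x j t) α)
        = fun t => (objP2 K h σ2 x α - phiP2 (h j) (x j)) + phiP2 (h j) t := by
      funext t; rw [objP2_update]; ring
    rw [heq, hdspec j]
    exact (hasDerivAt_phiP2 (h j) (hxpos j)).const_add _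
  -- (a) upward perturbation
  have hup : ∀ j, x j < Pmax * α → 0 ≤ d j := by
    intro j hj
    refine deriv_nonneg_of_min_right (hderF j) hj ?_
    intro t ht
    obtain ⟨ht1, ht2⟩ := ht
    have hfe : FeasP2 K b η Pmax (Function.update x j t) α := by
      refine ⟨?_, ?_, hα⟩
      · rw [budget_update]
        have h2 : 0 ≤ b j * t - b j * x j := by
          nlinarith [mul_nonneg (sub_nonneg.2 ht1) (hb j).le]
        have h3 := hbud
        rw [ge_iff_le] at h3 ⊢
        linarith
      · intro i
        rcases eq_or_ne i j with rfl | hne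
        · rw [Function.update_self]
          exact ⟨le_trans (hxpos i).le ht1, ht2.le⟩
        · rw [Function.update_of_ne hne]; exact hbox i
    show objP2 K h σ2 (Function.update x j (x j)) α ≤ objP2 K h σ2 (Function.update x j t) α
    rw [Function.update_eq_self]
    exact hmin _ _ hfe
  -- (b) downward perturbation (needs budget slack)
  have hdown : η * α < ∑ k, b k * x k → ∀ k, d k ≤ 0 := by
    intro hsl k
    have hbk := hb k
    set ε := min (x k) ((∑ i, b i * x i - η * α) / b k) with hεdef
    have hεpos : 0 < ε := lt_min (hxpos k) (div_pos (by linarith) hbk)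
    have hε1 : ε ≤ x k := min_le_left _ _
    have hε2 : b k * ε ≤ ∑ i, b i * x i - η * α := by
      have h2 : ε ≤ (∑ i, b i * x i - η * α) / b k := min_le_right _ _
      have h3 := (le_div_iff₀ hbk).1 h2
      linarith
    refine deriv_nonpos_of_min_left (hderF k) (show x k - ε < x k by linarith) ?_
    intro t ht
    obtain ⟨ht1, ht2⟩ := ht
    have htpos : 0 < t := by linarith
    have hfe : FeasP2 K b η Pmax (Function.update x k t) α := by
      refine ⟨?_, ?_, hα⟩
      · rw [budget_update]
        have h4 : b k * (-ε) ≤ b k * (t - x k) :=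
          mul_le_mul_of_nonneg_left (by linarith) hbk.le
        rw [ge_iff_le]
        nlinarith
      · intro i
        rcases eq_or_ne i k with rfl | hne
        · rw [Function.update_self]
          exact ⟨htpos.le, le_trans ht2 (hbox i).2⟩
        · rw [Function.update_of_ne hne]; exact hbox i
    show objP2 K h σ2 (Function.update x k (x k)) α ≤ objP2 K h σ2 (Function.update x k t) α
    rw [Function.update_eq_self]
    exact hmin _ _ hfe
  -- (c) exchange perturbation
  have hex : ∀ j k, j ≠ k → x j < Pmax * α → d k * b j ≤ d j * b k := by
    intro j k hjk hj
    have hbj := hb j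
    have hbk := hb k
    have hkj : k ≠ j := Ne.symm hjk
    set ε := min ((Pmax * α - x j) * b j) (x k * b k) with hεdef
    have hεpos : 0 < ε := lt_min (by nlinarith) (by nlinarith [hxpos k])
    have hcurve : ∀ t : ℝ, objP2 K h σ2
        (Function.update (Function.update x j (x j + (1 / b j) * t)) k
          (x k + (-(1 / b k)) * t)) α
        = objP2 K h σ2 x α + (phiP2 (h j) (x j + (1 / b j) * t) - phiP2 (h j) (x j))
          + (phiP2 (h k) (x k + (-(1 / b k)) * t) - phiP2 (h k) (x k)) := by
      intro t
      rw [objP2_update, objP2_update, Function.update_of_ne hkj]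
    have hder : HasDerivAt (fun t => objP2 K h σ2
        (Function.update (Function.update x j (x j + (1 / b j) * t)) k
          (x k + (-(1 / b k)) * t)) α)
        (d j * (1 / b j) + d k * (-(1 / b k))) 0 := by
      have hpj : (0:ℝ) < x j + (1 / b j) * (0:ℝ) := by simpa using hxpos j
      have hpk : (0:ℝ) < x k + (-(1 / b k)) * (0:ℝ) := by simpa using hxpos k
      have hdj := hasDerivAt_phiP2_affine (h j) hpj
      have hdk := hasDerivAt_phiP2_affine (h k) hpk
      have heq : (fun t => objP2 K h σ2
          (Function.update (Function.update x j (x j + (1 / b j) * t)) k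
            (x k + (-(1 / b k)) * t)) α)
          = fun t => (objP2 K h σ2 x α - phiP2 (h j) (x j) - phiP2 (h k) (x k))
            + (phiP2 (h j) (x j + (1 / b j) * t) + phiP2 (h k) (x k + (-(1 / b k)) * t)) := by
        funext t; rw [hcurve t]; ring
      rw [heq]
      have hcomb := (hdj.add hdk).const_add
        (objP2 K h σ2 x α - phiP2 (h j) (x j) - phiP2 (h k) (x k))
      convert hcomb using 1
      · rfl
      · rfl
      · rfl
      rw [hdspec j, hdspec k]
      simp
    have h0 : 0 ≤ d j * (1 / b j) + d k * (-(1 / b k)) := by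
      refine deriv_nonneg_of_min_right hder hεpos ?_
      intro t ht
      obtain ⟨ht1, ht2⟩ := ht
      have htb1 : t < (Pmax * α - x j) * b j := lt_of_lt_of_le ht2 (min_le_left _ _)
      have htb2 : t < x k * b k := lt_of_lt_of_le ht2 (min_le_right _ _)
      have hyj1 : 0 ≤ x j + (1 / b j) * t :=
        add_nonneg (hxpos j).le (mul_nonneg (by positivity) ht1)
      have hyj2 : x j + (1 / b j) * t ≤ Pmax * α := by
        have h5 : t / b j ≤ Pmax * α - x j := (div_le_iff₀ hbj).2 (by nlinarith)
        have h6 : (1 / b j) * t = t / b j := by ring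
        linarith [h6.le, h6.ge]
      have hyk1 : 0 ≤ x k + (-(1 / b k)) * t := by
        have h5 : t / b k ≤ x k := (div_le_iff₀ hbk).2 (by nlinarith)
        have h6 : (-(1 / b k)) * t = -(t / b k) := by ring
        linarith [h6.le, h6.ge]
      have hyk2 : x k + (-(1 / b k)) * t ≤ Pmax * α := by
        have h5 : 0 ≤ (1 / b k) * t := mul_nonneg (by positivity) ht1
        have h6 := (hbox k).2
        linarith
      have hfe : FeasP2 K b η Pmax
          (Function.update (Function.update x j (x j + (1 / b j) * t)) k
            (x k + (-(1 / b k)) * t)) α := by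
        refine ⟨?_, ?_, hα⟩
        · rw [budget_update, Function.update_of_ne hkj, budget_update]
          have e1 : b j * (x j + 1 / b j * t) - b j * x j = t := by field_simp <;> ring
          have e2 : b k * (x k + -(1 / b k) * t) - b k * x k = -t := by field_simp <;> ring
          rw [ge_iff_le]
          have h7 := hbud
          rw [ge_iff_le] at h7
          linarith [e1.le, e1.ge, e2.le, e2.ge]
        · intro i
          by_cases hik : i = k
          · subst hik; rw [Function.update_self]; exact ⟨hyk1, hyk2⟩
          · rw [Function.update_of_ne hik]
            by_cases hij : i = j
            · subst hij; rw [Function.update_self]; exact ⟨hyj1, hyj2⟩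
            · rw [Function.update_of_ne hij]; exact hbox i
      show objP2 K h σ2
          (Function.update (Function.update x j (x j + (1 / b j) * 0)) k
            (x k + (-(1 / b k)) * 0)) α ≤ _
      have e0 : Function.update (Function.update x j (x j + (1 / b j) * 0)) k
          (x k + (-(1 / b k)) * 0) = x := by
        simp only [mul_zero, add_zero]
        rw [Function.update_eq_self, Function.update_eq_self]
      rw [e0]
      exact hmin _ _ hfe
    have h8 : d k / b k ≤ d j / b j := by
      have h9 : d j * (1 / b j) = d j / b j := by ring
      have h10 : d k * (-(1 / b k)) = -(d k / b k) := by ring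
      linarith [h9.le, h9.ge, h10.le, h10.ge]
    exact (div_le_div_iff₀ hbk hbj).1 h8
  -- Step 3: construct the multiplier
  obtain ⟨lam, hlam0, hc1, hc2, hcs⟩ :
      ∃ lam : ℝ, 0 ≤ lam ∧ (∀ k, x k < Pmax * α → d k = lam * b k) ∧
        (∀ k, d k ≤ lam * b k) ∧ lam * (η * α - ∑ k, b k * x k) = 0 := by
    by_cases hall : ∀ k, x k = Pmax * α
    · have hslack : η * α < ∑ k, b k * x k := by
        have hsum : ∑ k, b k * x k = (∑ k, b k) * (Pmax * α) := by
          rw [Finset.sum_mul]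
          exact Finset.sum_congr rfl fun k _ => by rw [hall k]
        rw [hsum]
        nlinarith [hα, hstrict]
      refine ⟨0, le_rfl, fun k hk => absurd (hall k) (ne_of_lt hk), fun k => ?_, by ring⟩
      rw [zero_mul]
      exact hdown hslack k
    · push_neg at hall
      obtain ⟨j, hjne⟩ := hall
      have hj : x j < Pmax * α := lt_of_le_of_ne (hbox j).2 hjne
      refine ⟨d j / b j, div_nonneg (hup j hj) (hb j).le, ?_, ?_, ?_⟩
      · intro k hk
        rcases eq_or_ne k j with rfl | hne
        · rw [div_mul_cancel₀ _ (hb k).ne']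
        · have h1 := hex j k (Ne.symm hne) hj
          have h2 := hex k j hne hk
          have h3 : d k * b j = d j * b k := le_antisymm h1 h2
          rw [div_mul_eq_mul_div, eq_div_iff (hb j).ne']
          linarith
      · intro k
        rcases ((hbox k).2).lt_or_eq with hk | hk
        · rcases eq_or_ne k j with rfl | hne
          · rw [div_mul_cancel₀ _ (hb k).ne']
          · have h1 := hex j k (Ne.symm hne) hj
            have h2 := hex k j hne hk
            rw [div_mul_eq_mul_div, le_div_iff₀ (hb j)]
            exact h1
        · have hne : j ≠ k := fun he => by rw [he, hk] at hj; exact lt_irrefl _ hj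
          have h1 := hex j k hne hj
          rw [div_mul_eq_mul_div, le_div_iff₀ (hb j)]
          exact h1
      · by_cases hsl : η * α < ∑ k, b k * x k
        · have h1 := hup j hj
          have h2 := hdown hsl j
          have : d j = 0 := le_antisymm h2 h1
          rw [this, zero_div, zero_mul]
        · have : ∑ k, b k * x k = η * α := le_antisymm (not_lt.1 hsl) hbud
          rw [this, sub_self, mul_zero]
  -- Step 4: algebra
  have hsP : 0 < Real.sqrt (Pmax * α) := Real.sqrt_pos.2 hU
  have hsq : Real.sqrt (Pmax * α) ^ 2 = Pmax * α := Real.sq_sqrt hU.le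
  have hiota_b : ∀ k, iota K h b Pmax k α * b k
      = (h k) ^ 2 - h k / Real.sqrt (Pmax * α) := by
    intro k
    unfold iota
    rw [mul_comm α Pmax]
    have hbk := (hb k).ne'
    have hhk := (hh k).ne'
    field_simp
  refine ⟨lam, hlam0, ?_, hcs, ?_⟩
  · -- (i)
    intro k
    have hhk := hh k
    have hbk := hb k
    have hxk0 := hxpos k
    have hsx : 0 < Real.sqrt (x k) := Real.sqrt_pos.2 hxk0
    constructor
    · intro hlt
      have hxk : x k < Pmax * α := by
        rcases ((hbox k).2).lt_or_eq with hk | hk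
        · exact hk
        exfalso
        have hdk : d k = (h k) ^ 2 - h k / Real.sqrt (Pmax * α) := by
          rw [hdspec k, hk]
        have h2 := hc2 k
        rw [hdk, ← hiota_b k] at h2
        have h3 := (mul_le_mul_iff_of_pos_right hbk).1 h2
        linarith
      have hdk := hc1 k hxk
      have hpos2 : 0 < (h k) ^ 2 - lam * b k := by
        have h3 := hiota_b k
        have h4 : lam * b k < iota K h b Pmax k α * b k := (mul_lt_mul_iff_of_pos_right hbk).2 hlt
        have h5 : 0 < h k / Real.sqrt (Pmax * α) := by positivity
        linarith
      have hdk' : h k / Real.sqrt (x k) = (h k) ^ 2 - lam * b k := by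
        rw [hdspec k] at hdk
        linarith
      have hsx' : Real.sqrt (x k) = h k / ((h k) ^ 2 - lam * b k) := by
        rw [eq_div_iff hpos2.ne']
        rw [div_eq_iff hsx.ne'] at hdk'
        linarith
      calc x k = Real.sqrt (x k) ^ 2 := (Real.sq_sqrt hxk0.le).symm
      _ = (h k) ^ 2 / ((h k) ^ 2 - lam * b k) ^ 2 := by rw [hsx', div_pow]
    · intro hge
      by_contra hne
      have hxk : x k < Pmax * α := by
        rcases ((hbox k).2).lt_or_eq with hk | hk
        · exact hk
        · exact absurd (hk.trans (mul_comm Pmax α)) hne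
      have hdk := hc1 k hxk
      have h2 : iota K h b Pmax k α * b k ≤ lam * b k := (mul_le_mul_iff_of_pos_right hbk).2 hge
      rw [hiota_b k, ← hdk, hdspec k] at h2
      have h3 : h k / Real.sqrt (x k) ≤ h k / Real.sqrt (Pmax * α) := by linarith
      have h4 : Real.sqrt (Pmax * α) ≤ Real.sqrt (x k) := by
        rw [div_le_div_iff₀ hsx hsP] at h3
        exact le_of_mul_le_mul_left h3 hhk
      have h5 : Pmax * α ≤ x k := by
        have h6 := mul_self_le_mul_self hsP.le h4
        rwa [Real.mul_self_sqrt hU.le, Real.mul_self_sqrt hxk0.le] at h6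
      linarith
  · -- (iii)
    have hterm : ∀ k, x k * (lam * b k - d k)
        = (Pmax * α) * max 0 (h k / Real.sqrt (Pmax * α) - ((h k) ^ 2 - lam * b k)) := by
      intro k
      have hhk := hh k
      have hsx : 0 < Real.sqrt (x k) := Real.sqrt_pos.2 (hxpos k)
      rcases ((hbox k).2).lt_or_eq with hk | hk
      · have hdk := hc1 k hk
        have hneg : h k / Real.sqrt (Pmax * α) - ((h k) ^ 2 - lam * b k) ≤ 0 := by
          rw [← hdk, hdspec k]
          have h4 : Real.sqrt (x k) ≤ Real.sqrt (Pmax * α) := Real.sqrt_le_sqrt hk.le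
          have h5 : h k / Real.sqrt (Pmax * α) ≤ h k / Real.sqrt (x k) :=
            (div_le_div_iff₀ hsP hsx).2 (mul_le_mul_of_nonneg_left h4 hhk.le)
          linarith
        rw [max_eq_left hneg, hdk]
        ring
      · rw [hdspec k, hk]
        have hpos : 0 ≤ h k / Real.sqrt (Pmax * α) - ((h k) ^ 2 - lam * b k) := by
          have h6 := hc2 k
          rw [hdspec k, hk] at h6
          linarith
        rw [max_eq_right hpos]
        ring
    have hsum1 : ∑ k, x k * (lam * b k - d k)
        = (Pmax * α) * ∑ k, max 0 (h k / Real.sqrt (Pmax * α) - ((h k) ^ 2 - lam * b k)) := by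
      rw [Finset.mul_sum]
      exact Finset.sum_congr rfl fun k _ => hterm k
    have hsum2 : ∑ k, x k * (lam * b k - d k)
        = lam * (∑ k, b k * x k) - (∑ k, (h k) ^ 2 * x k) + (∑ k, h k * Real.sqrt (x k)) := by
      have hper : ∀ k, x k * (lam * b k - d k)
          = lam * (b k * x k) - ((h k) ^ 2 * x k) + h k * Real.sqrt (x k) := by
        intro k
        have hsxne : Real.sqrt (x k) ≠ 0 := (Real.sqrt_pos.2 (hxpos k)).ne'
        have hx2 : Real.sqrt (x k) * Real.sqrt (x k) = x k := Real.mul_self_sqrt (hxpos k).le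
        have e : x k * (h k / Real.sqrt (x k)) = h k * Real.sqrt (x k) := by
          field_simp
          linear_combination (-(h k)) * hx2
        rw [hdspec k]
        linear_combination e
      rw [Finset.mul_sum, ← Finset.sum_sub_distrib, ← Finset.sum_add_distrib]
      exact Finset.sum_congr rfl fun k _ => hper k
    have hlam_bud : lam * (∑ k, b k * x k) = lam * (η * α) := by
      linear_combination (-1 : ℝ) * hcs
    rw [div_eq_iff hP.ne']
    have hfin : lam * (η * α) + α * σ2
        = (Pmax * α) * ∑ k, max 0 (h k / Real.sqrt (Pmax * α) - ((h k) ^ 2 - lam * b k)) := by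
      linarith [hsum1, hsum2, hE1, hlam_bud]
    have h9 : α * (σ2 + lam * η)
        = α * ((∑ k, max 0 (h k / Real.sqrt (Pmax * α) - ((h k) ^ 2 - lam * b k))) * Pmax) := by
      linear_combination hfin
    exact mul_left_cancel₀ hα.ne' h9
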